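/- arXiv:1211.4803 — 3 statements merged into one kernel-verified Lean document; each statement's English description precedes it below -/
import Mathlib

section
/- For each i ∈ ℕ, the set U_i = {f ∈ C[0,1] : ∃ R ≥ i such that inf over Borel probability measures μ supported on the graph G_f of sup_{i ≤ |ξ| ≤ R} |μ̂(ξ)| > 1/5} is open in C[0,1] with the sup-norm. -/
open MeasureTheory Set

noncomputable def ft2 (μ : Measure (ℝ × ℝ)) (ξ : ℝ × ℝ) : ℂ :=
  ∫ x, Complex.exp (-2 * Real.pi * Complex.I * ((x.1 * ξ.1 + x.2 * ξ.2 : ℝ) : ℂ)) ∂μ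

noncomputable def enorm2 (ξ : ℝ × ℝ) : ℝ := Real.sqrt (ξ.1 ^ 2 + ξ.2 ^ 2)

/-- The graph of a continuous function on `[0,1]`, as a subset of `ℝ × ℝ`. -/
def graphOf (f : C(Set.Icc (0:ℝ) 1, ℝ)) : Set (ℝ × ℝ) :=
  {p : ℝ × ℝ | ∃ x : Set.Icc (0:ℝ) 1, p.1 = (x : ℝ) ∧ p.2 = f x}

/-- The set `U_i` of functions `f` such that for some `R ≥ i`, every Borel probability
measure on the graph of `f` has `sup_{i ≤ |ξ| ≤ R} |μ̂(ξ)| > 1/5`, uniformly in `μ`. -/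
def U (i : ℕ) : Set C(Set.Icc (0:ℝ) 1, ℝ) :=
  {f | ∃ R : ℝ, (i : ℝ) ≤ R ∧ ∃ c : ℝ, 1 / 5 < c ∧
    ∀ μ : Measure (ℝ × ℝ), IsProbabilityMeasure μ → μ (graphOf f)ᶜ = 0 →
      ∃ ξ : ℝ × ℝ, (i : ℝ) ≤ enorm2 ξ ∧ enorm2 ξ ≤ R ∧ c ≤ ‖ft2 μ ξ‖}

lemma norm_exp_mul_I_sub_one_le (u : ℝ) : ‖Complex.exp (u * Complex.I) - 1‖ ≤ |u| := by
  have h : Complex.exp (u * Complex.I) - 1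
      = ((Real.cos u - 1 : ℝ) : ℂ) + ((Real.sin u : ℝ) : ℂ) * Complex.I := by
    rw [Complex.exp_mul_I]
    push_cast
    ring
  rw [h]
  have h2 : ‖(((Real.cos u - 1 : ℝ) : ℂ) + ((Real.sin u : ℝ) : ℂ) * Complex.I)‖
      = Real.sqrt ((Real.cos u - 1) ^ 2 + Real.sin u ^ 2) := by
    rw [Complex.norm_def, Complex.normSq_add_mul_I]
  rw [h2, ← Real.sqrt_sq_eq_abs]
  apply Real.sqrt_le_sqrt
  nlinarith [Real.one_sub_sq_div_two_le_cos (x := u), Real.sin_sq_add_cos_sq u,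
    Real.cos_le_one u]

lemma norm_exp_sub_exp_le (a b : ℝ) :
    ‖Complex.exp (-2 * Real.pi * Complex.I * (a : ℂ)) -
      Complex.exp (-2 * Real.pi * Complex.I * (b : ℂ))‖ ≤ 2 * Real.pi * |a - b| := by
  have hfac : Complex.exp (-2 * Real.pi * Complex.I * (a : ℂ)) -
      Complex.exp (-2 * Real.pi * Complex.I * (b : ℂ))
      = Complex.exp (-2 * Real.pi * Complex.I * (b : ℂ)) *
        (Complex.exp (((2 * Real.pi * (b - a) : ℝ) : ℂ) * Complex.I) - 1) := by
    rw [mul_sub, ← Complex.exp_add]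
    push_cast
    ring_nf
  rw [hfac, norm_mul]
  have h1 : ‖Complex.exp (-2 * Real.pi * Complex.I * (b : ℂ))‖ = 1 := by
    rw [Complex.norm_exp]
    simp
  rw [h1, one_mul]
  calc ‖Complex.exp (((2 * Real.pi * (b - a) : ℝ) : ℂ) * Complex.I) - 1‖
      ≤ |2 * Real.pi * (b - a)| := norm_exp_mul_I_sub_one_le _
    _ = 2 * Real.pi * |a - b| := by
        rw [abs_mul, abs_of_nonneg (by positivity : (0:ℝ) ≤ 2 * Real.pi), abs_sub_comm]

theorem U_isOpen (i : ℕ) : IsOpen (U i) := by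
  rw [Metric.isOpen_iff]
  rintro f ⟨R, hR, c, hc, hf⟩
  have hπ : 0 < Real.pi := Real.pi_pos
  have hR0 : 0 ≤ R := le_trans (Nat.cast_nonneg i) hR
  have hden : (0:ℝ) < 2 * Real.pi * R + 1 := by positivity
  set ε : ℝ := (c - 1/5) / (2 * (2 * Real.pi * R + 1)) with hε
  have hεpos : 0 < ε := by
    apply div_pos (by linarith) (by positivity)
  refine ⟨ε, hεpos, ?_⟩
  intro g hg
  rw [Metric.mem_ball] at hg
  refine ⟨R, hR, (c + 1/5) / 2, by linarith, ?_⟩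
  intro μ hμ hsupp
  -- the extension of f to ℝ
  set F : ℝ → ℝ := fun x => f (Set.projIcc 0 1 (by norm_num) x) with hF
  have hFcont : Continuous F := f.continuous.comp continuous_projIcc
  set T : ℝ × ℝ → ℝ × ℝ := fun p => (p.1, F p.1) with hT
  have hTcont : Continuous T := continuous_fst.prodMk (hFcont.comp continuous_fst)
  set ν : Measure (ℝ × ℝ) := Measure.map T μ with hν
  have hνprob : IsProbabilityMeasure ν := Measure.isProbabilityMeasure_map hTcont.measurable.aemeasurable
  -- graph of f is closed
  have hgraph_eq : graphOf f = Set.range (fun x : Set.Icc (0:ℝ) 1 => ((x : ℝ), f x)) := by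
    ext p
    simp only [graphOf, mem_setOf_eq, Set.mem_range, Prod.ext_iff]
    constructor
    · rintro ⟨x, h1, h2⟩; exact ⟨x, h1.symm, h2.symm⟩
    · rintro ⟨x, h1, h2⟩; exact ⟨x, h1.symm, h2.symm⟩
  have hclosed : IsClosed (graphOf f) := by
    rw [hgraph_eq, ← Set.image_univ]
    exact (isCompact_univ.image (continuous_subtype_val.prodMk f.continuous)).isClosed
  -- T maps graph of g into graph of f
  have hmaps : ∀ p ∈ graphOf g, T p ∈ graphOf f := by
    rintro p ⟨x, h1, _⟩
    refine ⟨x, h1, ?_⟩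
    simp only [hT, hF, h1]
    rw [Set.projIcc_val]
  have hνsupp : ν (graphOf f)ᶜ = 0 := by
    rw [hν, Measure.map_apply hTcont.measurable hclosed.measurableSet.compl]
    refine measure_mono_null ?_ hsupp
    intro p hp
    simp only [Set.mem_preimage, Set.mem_compl_iff] at hp ⊢
    exact fun h => hp (hmaps p h)
  obtain ⟨ξ, hξ1, hξ2, hξ3⟩ := hf ν hνprob hνsupp
  refine ⟨ξ, hξ1, hξ2, ?_⟩
  -- |ξ.2| ≤ R
  have hξ2R : |ξ.2| ≤ R := by
    refine le_trans ?_ hξ2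
    rw [enorm2, ← Real.sqrt_sq_eq_abs]
    exact Real.sqrt_le_sqrt (by nlinarith [sq_nonneg ξ.1])
  -- the two integrands
  set f1 : ℝ × ℝ → ℂ := fun p =>
    Complex.exp (-2 * Real.pi * Complex.I * ((p.1 * ξ.1 + p.2 * ξ.2 : ℝ) : ℂ)) with hf1
  set f2 : ℝ × ℝ → ℂ := fun p =>
    Complex.exp (-2 * Real.pi * Complex.I * ((p.1 * ξ.1 + F p.1 * ξ.2 : ℝ) : ℂ)) with hf2
  have hf1cont : Continuous f1 := by
    apply Complex.continuous_exp.comp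
    apply Continuous.mul continuous_const
    exact Complex.continuous_ofReal.comp
      ((continuous_fst.mul continuous_const).add (continuous_snd.mul continuous_const))
  have hf2cont : Continuous f2 := by
    apply Complex.continuous_exp.comp
    apply Continuous.mul continuous_const
    exact Complex.continuous_ofReal.comp
      ((continuous_fst.mul continuous_const).add
        ((hFcont.comp continuous_fst).mul continuous_const))
  have hnorm1 : ∀ p, ‖f1 p‖ = 1 := by
    intro p
    rw [hf1]
    simp only [Complex.norm_exp]
    norm_num [Complex.mul_re]
  have hnorm2 : ∀ p, ‖f2 p‖ = 1 := by
    intro p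
    rw [hf2]
    simp only [Complex.norm_exp]
    norm_num [Complex.mul_re]
  have hint1 : Integrable f1 μ := by
    refine (integrable_const (1:ℝ)).mono' hf1cont.aestronglyMeasurable ?_
    exact ae_of_all _ fun p => le_of_eq (hnorm1 p)
  have hint2 : Integrable f2 μ := by
    refine (integrable_const (1:ℝ)).mono' hf2cont.aestronglyMeasurable ?_
    exact ae_of_all _ fun p => le_of_eq (hnorm2 p)
  -- ft2 ν ξ as an integral against μ
  have hνft : ft2 ν ξ = ∫ p, f2 p ∂μ := by
    rw [ft2, hν, integral_map hTcont.measurable.aemeasurable hf1cont.aestronglyMeasurable]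
  -- the key estimate
  have hae : ∀ᵐ p ∂μ, p ∈ graphOf g := by
    rw [ae_iff]
    convert hsupp using 2
    rfl
  have key : ‖ft2 μ ξ - ft2 ν ξ‖ ≤ 2 * Real.pi * R * dist g f := by
    have heq : ft2 μ ξ - ft2 ν ξ = ∫ p, (f1 p - f2 p) ∂μ := by
      rw [hνft, ft2, integral_sub hint1 hint2]
    rw [heq]
    have := norm_integral_le_of_norm_le_const (μ := μ)
      (f := fun p => f1 p - f2 p) (C := 2 * Real.pi * R * dist g f) ?_
    · simpa using this
    · filter_upwards [hae] with p hp
      obtain ⟨x, hx1, hx2⟩ := hp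
      have hFp : F p.1 = f x := by
        rw [hx1]
        show f (Set.projIcc 0 1 (by norm_num) (x : ℝ)) = f x
        rw [Set.projIcc_val]
      have hb := norm_exp_sub_exp_le (p.1 * ξ.1 + p.2 * ξ.2) (p.1 * ξ.1 + F p.1 * ξ.2)
      refine le_trans hb ?_
      have habs : |p.1 * ξ.1 + p.2 * ξ.2 - (p.1 * ξ.1 + F p.1 * ξ.2)|
          = |g x - f x| * |ξ.2| := by
        rw [hx2, hFp, ← abs_mul]
        ring_nf
      rw [habs]
      have hgf : |g x - f x| ≤ dist g f := by
        have := ContinuousMap.dist_apply_le_dist (f := g) (g := f) x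
        rwa [Real.dist_eq] at this
      have h0 : (0:ℝ) ≤ dist g f := dist_nonneg
      have h1 : |g x - f x| * |ξ.2| ≤ dist g f * R :=
        mul_le_mul hgf hξ2R (abs_nonneg _) h0
      nlinarith
  -- conclude
  have h5 : ‖ft2 ν ξ‖ - ‖ft2 μ ξ‖ ≤ ‖ft2 μ ξ - ft2 ν ξ‖ := by
    have := norm_sub_norm_le (ft2 ν ξ) (ft2 μ ξ)
    rwa [norm_sub_rev] at this
  have hεeq : ε * (2 * (2 * Real.pi * R + 1)) = c - 1/5 := by
    rw [hε]
    field_simp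
  have hd0 : (0:ℝ) ≤ dist g f := dist_nonneg
  have h6 : 2 * Real.pi * R * dist g f ≤ 2 * Real.pi * R * ε :=
    mul_le_mul_of_nonneg_left (le_of_lt hg) (by positivity)
  nlinarith [hεpos]
end

section
/- For a typical (residual in the Baire category sense) function f in C[0,1], every Borel probability measure μ supported on the graph G_f satisfies limsup_{|ξ|→∞} |μ̂(ξ)| ≥ 1/5. In particular, the set of f ∈ C[0,1] for which every Borel probability measure on G_f has this property is residual in C[0,1]. -/
open MeasureTheory Filter Set

/-- scalar trig lemma -/
lemma cos_add_cos_two_mul_ge (x : ℝ) : -(9/8) ≤ Real.cos x + Real.cos (2*x) := by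
  rw [Real.cos_two_mul]
  nlinarith [sq_nonneg (Real.cos x + 1/4)]

lemma abs_cos_sub_cos_le (a b : ℝ) : |Real.cos a - Real.cos b| ≤ |a - b| := by
  rw [Real.cos_sub_cos]
  have h1 : |Real.sin ((a+b)/2)| ≤ 1 := Real.abs_sin_le_one _
  have h2 : |Real.sin ((a-b)/2)| ≤ |(a-b)/2| := Real.abs_sin_le_abs
  rw [abs_mul, abs_mul]
  have : |(a - b)/2| = |a - b|/2 := by rw [abs_div]; norm_num
  rw [this] at h2
  have hn : |(-2 : ℝ)| = 2 := by norm_num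
  rw [hn]
  nlinarith [abs_nonneg (Real.sin ((a+b)/2)), abs_nonneg (a-b)]

noncomputable def zig (γ : ℝ) (P : ℕ) (W : ℕ → ℤ) (t : ℝ) : ℝ :=
  γ/2 * (W 0) + ∑ j ∈ Finset.range P,
    (γ/2 * ((W (j+1) : ℝ) - (W j : ℝ))) * (max 0 (min 1 ((P:ℝ)*t - j)))

lemma zig_continuous (γ : ℝ) (P : ℕ) (W : ℕ → ℤ) : Continuous (zig γ P W) := by
  unfold zig
  refine continuous_const.add (continuous_finset_sum _ fun j _ => continuous_const.mul ?_)
  exact continuous_const.max (continuous_const.min (by fun_prop))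

lemma zig_piece (γ : ℝ) (P : ℕ) (W : ℕ → ℤ) {i : ℕ} {t : ℝ} (hi : i < P)
    (h1 : (i:ℝ) ≤ (P:ℝ)*t) (h2 : (P:ℝ)*t ≤ (i:ℝ)+1) :
    zig γ P W t = γ/2 * (W i) + γ/2 * ((W (i+1) : ℝ) - (W i : ℝ)) * ((P:ℝ)*t - i) := by
  unfold zig
  have hsplit : Finset.range P = Finset.range (i+1) ∪ Finset.Ico (i+1) P := by
    rw [Finset.range_eq_Ico, Finset.range_eq_Ico]
    exact (Finset.Ico_union_Ico_eq_Ico (Nat.zero_le (i+1)) hi).symm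
  rw [hsplit, Finset.sum_union (by
    simp [Finset.disjoint_left, Finset.mem_Ico, Finset.mem_range]
    omega)]
  have hz : ∑ j ∈ Finset.Ico (i+1) P,
      (γ/2 * ((W (j+1) : ℝ) - (W j : ℝ))) * (max 0 (min 1 ((P:ℝ)*t - j))) = 0 := by
    refine Finset.sum_eq_zero fun j hj => ?_
    rw [Finset.mem_Ico] at hj
    have : (P:ℝ)*t - j ≤ 0 := by
      have : ((i:ℝ)+1) ≤ (j:ℝ) := by exact_mod_cast hj.1
      linarith
    rw [min_eq_right (by linarith), max_eq_left (by linarith), mul_zero]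
  rw [hz, add_zero, Finset.sum_range_succ]
  have hone : ∀ j ∈ Finset.range i,
      (γ/2 * ((W (j+1) : ℝ) - (W j : ℝ))) * (max 0 (min 1 ((P:ℝ)*t - j)))
        = γ/2 * ((W (j+1) : ℝ) - (W j : ℝ)) := by
    intro j hj
    rw [Finset.mem_range] at hj
    have : (1:ℝ) ≤ (P:ℝ)*t - j := by
      have : (j:ℝ) + 1 ≤ (i:ℝ) := by exact_mod_cast hj
      linarith
    rw [min_eq_left (by linarith), max_eq_right (by linarith), mul_one]
  rw [Finset.sum_congr rfl hone]
  have htel : ∑ j ∈ Finset.range i, (γ/2 * ((W (j+1) : ℝ) - (W j : ℝ)))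
      = γ/2 * ((W i : ℝ) - (W 0 : ℝ)) := by
    rw [← Finset.mul_sum, Finset.sum_range_sub (fun j => (W j : ℝ))]
  rw [htel]
  have hiy : max 0 (min 1 ((P:ℝ)*t - i)) = (P:ℝ)*t - i := by
    rw [min_eq_right (by linarith), max_eq_right (by linarith)]
  rw [hiy]
  ring

noncomputable def Wseq (γ : ℝ) (F : ℝ → ℝ) (P : ℕ) : ℕ → ℤ
  | 0 => 2 * round (F 0 / γ)
  | (i+1) => Wseq γ F P i + (if (γ/2) * (Wseq γ F P i) ≤ F (((i:ℝ)+1)/(P:ℝ)) then 1 else -1)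

lemma Wseq_step (γ : ℝ) (F : ℝ → ℝ) (P : ℕ) (i : ℕ) :
    Wseq γ F P (i+1) = Wseq γ F P i + 1 ∨ Wseq γ F P (i+1) = Wseq γ F P i - 1 := by
  by_cases h : (γ/2) * (Wseq γ F P i) ≤ F (((i:ℝ)+1)/(P:ℝ))
  · left; simp [Wseq, h]
  · right; simp [Wseq, h]; ring

lemma Wseq_parity (γ : ℝ) (F : ℝ → ℝ) (P : ℕ) (i : ℕ) :
    ∃ k : ℤ, Wseq γ F P i - i = 2 * k := by
  induction i with
  | zero => exact ⟨round (F 0 / γ), by simp [Wseq]⟩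
  | succ n ih =>
    obtain ⟨k, hk⟩ := ih
    rcases Wseq_step γ F P n with h | h
    · exact ⟨k, by push_cast [h]; linarith⟩
    · exact ⟨k - 1, by push_cast [h]; linarith⟩

lemma Wseq_approx (γ : ℝ) (hγ : 0 < γ) (F : ℝ → ℝ) (P : ℕ)
    (hF : ∀ i : ℕ, i < P → |F (((i:ℝ)+1)/(P:ℝ)) - F ((i:ℝ)/(P:ℝ))| ≤ γ/4) :
    ∀ i : ℕ, i ≤ P → |γ/2 * (Wseq γ F P i) - F ((i:ℝ)/(P:ℝ))| ≤ 3*γ/4 := by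
  intro i
  induction i with
  | zero =>
    intro _
    have h0 : |F 0 / γ - round (F 0 / γ)| ≤ 1/2 := abs_sub_round (F 0 / γ)
    have : |γ/2 * (2 * round (F 0 / γ) : ℤ) - F 0| ≤ 3*γ/4 := by
      push_cast
      have heq : γ/2 * (2 * (round (F 0 / γ) : ℝ)) - F 0
          = -γ * (F 0 / γ - (round (F 0 / γ) : ℝ)) := by field_simp; ring
      rw [heq, abs_mul, abs_neg, abs_of_pos hγ]
      nlinarith
    simpa [Wseq] using this
  | succ n ih =>
    intro hn
    have hnP : n < P := hn
    have ihh := ih (le_of_lt hnP)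
    have hFn := hF n hnP
    set w := γ/2 * (Wseq γ F P n : ℝ) with hw
    set v := F (((n:ℝ)+1)/(P:ℝ)) with hv
    have hwv : |w - v| ≤ γ := by
      have := abs_sub_le w (F ((n:ℝ)/(P:ℝ))) v
      rw [abs_sub_comm (F ((n:ℝ)/(P:ℝ))) v] at this
      linarith
    have hcast : ((n:ℝ)+1) = ((n+1 : ℕ) : ℝ) := by push_cast; ring
    by_cases h : w ≤ v
    · have hW : Wseq γ F P (n+1) = Wseq γ F P n + 1 := by simp [Wseq, ← hw, ← hv, h]
      have : |γ/2 * (Wseq γ F P (n+1) : ℝ) - v| ≤ 3*γ/4 := by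
        rw [hW]; push_cast
        have : γ/2 * ((Wseq γ F P n : ℝ) + 1) = w + γ/2 := by rw [hw]; ring
        rw [this]
        rw [abs_le] at hwv ⊢
        constructor <;> [skip; skip] <;> cases' hwv with h1 h2 <;> linarith
      rw [hv, hcast] at this; exact this
    · have hW : Wseq γ F P (n+1) = Wseq γ F P n - 1 := by
        have : ¬ (γ/2) * (Wseq γ F P n : ℝ) ≤ v := by rwa [← hw]
        simp [Wseq, ← hv, this]; ring
      have : |γ/2 * (Wseq γ F P (n+1) : ℝ) - v| ≤ 3*γ/4 := by
        rw [hW]; push_cast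
        have heq : γ/2 * ((Wseq γ F P n : ℝ) - 1) = w - γ/2 := by rw [hw]; ring
        rw [heq]
        push_neg at h
        rw [abs_le] at hwv ⊢
        constructor <;> cases' hwv with h1 h2 <;> linarith
      rw [hv, hcast] at this; exact this

lemma exists_piece {P : ℕ} (hP : 0 < P) {t : ℝ} (h0 : 0 ≤ t) (h1 : t ≤ 1) :
    ∃ i : ℕ, i < P ∧ (i:ℝ) ≤ (P:ℝ)*t ∧ (P:ℝ)*t ≤ (i:ℝ)+1 := by
  have hx0 : 0 ≤ (P:ℝ)*t := by positivity
  have hxP : (P:ℝ)*t ≤ (P:ℝ) := by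
    have : (1:ℝ) ≤ (P:ℝ) := by exact_mod_cast hP
    nlinarith
  set n := ⌊(P:ℝ)*t⌋₊ with hn
  by_cases hc : n ≤ P - 1
  · refine ⟨n, by omega, Nat.floor_le hx0, (Nat.lt_floor_add_one _).le⟩
  · refine ⟨P - 1, by omega, ?_, ?_⟩
    · have h2 : (n:ℝ) ≤ (P:ℝ)*t := Nat.floor_le hx0
      have h3 : P ≤ n := by omega
      have : ((P:ℕ):ℝ) ≤ (n:ℝ) := by exact_mod_cast h3
      have hcast : ((P - 1 : ℕ):ℝ) = (P:ℝ) - 1 := by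
        rw [Nat.cast_sub hP]; norm_num
      linarith
    · have hcast : ((P - 1 : ℕ):ℝ) = (P:ℝ) - 1 := by
        rw [Nat.cast_sub hP]; norm_num
      linarith

lemma zig_align (γ : ℝ) (hγ : γ ≠ 0) (P : ℕ) (hP : 0 < P) (W : ℕ → ℤ)
    (hstep : ∀ i, W (i+1) = W i + 1 ∨ W (i+1) = W i - 1)
    (hpar : ∀ i : ℕ, ∃ k : ℤ, W i - i = 2 * k)
    {t : ℝ} (h0 : 0 ≤ t) (h1 : t ≤ 1) :
    (∃ k : ℤ, zig γ P W t / γ - (P:ℝ)*t/2 = k) ∨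
    (∃ k : ℤ, zig γ P W t / γ + (P:ℝ)*t/2 = k) := by
  obtain ⟨i, hiP, hl, hr⟩ := exists_piece hP h0 h1
  have hz := zig_piece γ P W hiP hl hr
  obtain ⟨k, hk⟩ := hpar i
  have hkR : (W i : ℝ) - (i:ℝ) = 2 * (k:ℝ) := by exact_mod_cast hk
  rcases hstep i with h | h
  · left; refine ⟨k, ?_⟩
    rw [hz, h]
    push_cast
    have hkR' : γ * (W i:ℝ) - γ * i = γ * k * 2 := by linear_combination γ * hkR
    field_simp
    ring_nf
    linarith [hkR']
  · right; refine ⟨k + i, ?_⟩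
    rw [hz, h]
    push_cast
    have hkR' : γ * (W i:ℝ) - γ * i = γ * k * 2 := by linear_combination γ * hkR
    field_simp
    ring_nf
    linarith [hkR']

lemma master (γ : ℝ) (hγ : 0 < γ) (P : ℕ) (hP : 0 < P) (W : ℕ → ℤ)
    (hstep : ∀ i, W (i+1) = W i + 1 ∨ W (i+1) = W i - 1)
    (hpar : ∀ i : ℕ, ∃ k : ℤ, W i - i = 2 * k)
    {t : ℝ} (h0 : 0 ≤ t) (h1 : t ≤ 1) :
    7/8 ≤ Real.cos (2*Real.pi*(t * (-(P:ℝ)/2) + zig γ P W t * (1/γ)))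
      + Real.cos (2*Real.pi*(t * (-(P:ℝ)) + zig γ P W t * (2/γ)))
      + Real.cos (2*Real.pi*(t * ((P:ℝ)/2) + zig γ P W t * (1/γ)))
      + Real.cos (2*Real.pi*(t * ((P:ℝ)) + zig γ P W t * (2/γ))) := by
  set z := zig γ P W t with hzdef
  have hA1 : t * (-(P:ℝ)/2) + z * (1/γ) = z/γ - (P:ℝ)*t/2 := by
    rw [mul_one_div]; ring
  have hA2 : t * (-(P:ℝ)) + z * (2/γ) = 2*(z/γ - (P:ℝ)*t/2) := by
    field_simp; ring
  have hB1 : t * ((P:ℝ)/2) + z * (1/γ) = z/γ + (P:ℝ)*t/2 := by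
    rw [mul_one_div]; ring
  have hB2 : t * ((P:ℝ)) + z * (2/γ) = 2*(z/γ + (P:ℝ)*t/2) := by
    field_simp; ring
  rcases zig_align γ (ne_of_gt hγ) P hP W hstep hpar h0 h1 with ⟨k, hk⟩ | ⟨k, hk⟩
  · have e1 : Real.cos (2*Real.pi*(t * (-(P:ℝ)/2) + z * (1/γ))) = 1 := by
      rw [hA1, hk]
      rw [show 2*Real.pi*(k:ℝ) = (k:ℝ)*(2*Real.pi) by ring]
      exact Real.cos_int_mul_two_pi k
    have e2 : Real.cos (2*Real.pi*(t * (-(P:ℝ)) + z * (2/γ))) = 1 := by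
      rw [hA2, hk]
      rw [show 2*Real.pi*(2*(k:ℝ)) = ((2*k : ℤ):ℝ)*(2*Real.pi) by push_cast; ring]
      exact Real.cos_int_mul_two_pi (2*k)
    have e3 : Real.cos (2*Real.pi*(t * ((P:ℝ)) + z * (2/γ)))
        = Real.cos (2*(2*Real.pi*(t * ((P:ℝ)/2) + z * (1/γ)))) := by
      rw [hB1, hB2]; ring_nf
    rw [e1, e2, e3]
    have := cos_add_cos_two_mul_ge (2*Real.pi*(t * ((P:ℝ)/2) + z * (1/γ)))
    linarith
  · have e3 : Real.cos (2*Real.pi*(t * ((P:ℝ)/2) + z * (1/γ))) = 1 := by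
      rw [hB1, hk]
      rw [show 2*Real.pi*(k:ℝ) = (k:ℝ)*(2*Real.pi) by ring]
      exact Real.cos_int_mul_two_pi k
    have e4 : Real.cos (2*Real.pi*(t * ((P:ℝ)) + z * (2/γ))) = 1 := by
      rw [hB2, hk]
      rw [show 2*Real.pi*(2*(k:ℝ)) = ((2*k : ℤ):ℝ)*(2*Real.pi) by push_cast; ring]
      exact Real.cos_int_mul_two_pi (2*k)
    have e2 : Real.cos (2*Real.pi*(t * (-(P:ℝ)) + z * (2/γ)))
        = Real.cos (2*(2*Real.pi*(t * (-(P:ℝ)/2) + z * (1/γ)))) := by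
      rw [hA1, hA2]; ring_nf
    rw [e2, e3, e4]
    have := cos_add_cos_two_mul_ge (2*Real.pi*(t * (-(P:ℝ)/2) + z * (1/γ)))
    linarith

lemma exp_form (c : ℝ) : Complex.exp (-2*Real.pi*Complex.I*(c:ℂ))
    = Complex.exp (((-(2*Real.pi*c) : ℝ) :ℂ) * Complex.I) := by
  congr 1; push_cast; ring

lemma integrable_exp_phase (μ : Measure (ℝ × ℝ)) [IsFiniteMeasure μ] (ξ : ℝ × ℝ) :
    Integrable (fun p : ℝ×ℝ =>
      Complex.exp (-2*Real.pi*Complex.I*((p.1*ξ.1+p.2*ξ.2 :ℝ):ℂ))) μ := by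
  have hc : Continuous (fun p : ℝ×ℝ =>
      Complex.exp (-2*Real.pi*Complex.I*((p.1*ξ.1+p.2*ξ.2 :ℝ):ℂ))) := by
    apply Complex.continuous_exp.comp
    apply Continuous.mul continuous_const
    exact Complex.continuous_ofReal.comp (by fun_prop)
  refine (integrable_const (1:ℝ)).mono' hc.aestronglyMeasurable ?_
  filter_upwards with p
  rw [exp_form, Complex.norm_exp_ofReal_mul_I]

lemma integrable_cos_phase (μ : Measure (ℝ × ℝ)) [IsFiniteMeasure μ] (ξ : ℝ × ℝ) :
    Integrable (fun p : ℝ×ℝ => Real.cos (2*Real.pi*(p.1*ξ.1+p.2*ξ.2))) μ := by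
  have hc : Continuous (fun p : ℝ×ℝ => Real.cos (2*Real.pi*(p.1*ξ.1+p.2*ξ.2))) := by
    fun_prop
  refine (integrable_const (1:ℝ)).mono' hc.aestronglyMeasurable ?_
  filter_upwards with p
  rw [Real.norm_eq_abs]
  exact Real.abs_cos_le_one _

lemma re_ft2 (μ : Measure (ℝ × ℝ)) [IsFiniteMeasure μ] (ξ : ℝ × ℝ) :
    (ft2 μ ξ).re = ∫ p, Real.cos (2*Real.pi*(p.1*ξ.1 + p.2*ξ.2)) ∂μ := by
  unfold ft2
  have h := integral_re (𝕜 := ℂ) (integrable_exp_phase μ ξ)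
  simp only [RCLike.re_to_complex] at h
  rw [← h]
  congr 1
  funext p
  rw [exp_form, Complex.exp_ofReal_mul_I_re, ← Real.cos_neg]
  congr 1; ring

lemma norm_ft2_le_one (μ : Measure (ℝ × ℝ)) [IsProbabilityMeasure μ] (ξ : ℝ × ℝ) :
    ‖ft2 μ ξ‖ ≤ 1 := by
  unfold ft2
  have := MeasureTheory.norm_integral_le_of_norm_le_const (μ := μ) (C := 1)
    (f := fun p : ℝ×ℝ => Complex.exp (-2*Real.pi*Complex.I*((p.1*ξ.1+p.2*ξ.2 :ℝ):ℂ)))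
    (by filter_upwards with p; rw [exp_form, Complex.norm_exp_ofReal_mul_I])
  simpa using this

def Raw (N : ℕ) : Set C(Set.Icc (0:ℝ) 1, ℝ) :=
  {f | ∃ ξ : Fin 4 → ℝ × ℝ, (∀ i, (N:ℝ) ≤ ‖ξ i‖) ∧
    ∀ μ : Measure (ℝ×ℝ), IsProbabilityMeasure μ → μ (graphOf f)ᶜ = 0 →
      ∃ i, (1/5 : ℝ) < (ft2 μ (ξ i)).re}

def Good (N : ℕ) : Set C(Set.Icc (0:ℝ) 1, ℝ) :=
  {f | ∃ r > 0, Metric.ball f r ⊆ Raw N}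

lemma good_open (N : ℕ) : IsOpen (Good N) := by
  rw [Metric.isOpen_iff]
  rintro f ⟨r, hr, hsub⟩
  refine ⟨r, hr, fun g hg => ?_⟩
  refine ⟨r - dist g f, by simpa [sub_pos] using hg, ?_⟩
  exact subset_trans (Metric.ball_subset_ball' (by linarith)) hsub

lemma good_subset_raw (N : ℕ) : Good N ⊆ Raw N := by
  rintro f ⟨r, hr, hsub⟩
  exact hsub (Metric.mem_ball_self hr)

lemma inter_good_subset :
    (⋂ N : ℕ, Good N) ⊆ {f : C(Set.Icc (0:ℝ) 1, ℝ) |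
      ∀ μ : Measure (ℝ × ℝ), IsProbabilityMeasure μ → μ (graphOf f)ᶜ = 0 →
        (1 / 5 : ℝ) ≤ Filter.limsup (fun ξ : ℝ × ℝ => ‖ft2 μ ξ‖) (cocompact (ℝ × ℝ))} := by
  intro f hf μ hμ hsupp
  have hGood : ∀ N : ℕ, f ∈ Raw N := fun N =>
    good_subset_raw N (Set.mem_iInter.mp hf N)
  apply Filter.le_limsup_of_frequently_le
  · rw [Filter.frequently_iff]
    intro U hU
    rcases mem_cocompact.mp hU with ⟨K, hK, hKU⟩
    obtain ⟨R, hR⟩ := hK.isBounded.subset_closedBall 0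
    obtain ⟨ξ, hξn, hmain⟩ := hGood (⌈R⌉₊ + 1)
    obtain ⟨i, hi⟩ := hmain μ hμ hsupp
    refine ⟨ξ i, hKU ?_, ?_⟩
    · intro hmem
      have h1 : ‖ξ i‖ ≤ R := by
        have := hR hmem
        rwa [Metric.mem_closedBall, dist_zero_right] at this
      have h2 : ((⌈R⌉₊ + 1 : ℕ) : ℝ) ≤ ‖ξ i‖ := hξn i
      have h3 : R ≤ (⌈R⌉₊ : ℝ) := Nat.le_ceil R
      push_cast at h2
      linarith
    · calc (1/5 : ℝ) ≤ (ft2 μ (ξ i)).re := le_of_lt hi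
        _ ≤ ‖ft2 μ (ξ i)‖ := by
            exact Complex.re_le_norm _
  · exact Filter.isBoundedUnder_of ⟨1, fun ξ => norm_ft2_le_one μ ξ⟩

set_option maxHeartbeats 1000000 in
lemma good_dense (N : ℕ) : Dense (Good N) := by
  rw [Metric.dense_iff]
  intro f₀ ε hε
  classical
  set F : ℝ → ℝ := fun t => f₀ (Set.projIcc 0 1 zero_le_one t) with hFdef
  set γ : ℝ := min (ε/3) (1/((N:ℝ)+1)) with hγdef
  have hγ : 0 < γ := by
    apply lt_min (by linarith)
    positivity
  have hγε : γ ≤ ε/3 := min_le_left _ _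
  have hγN : γ ≤ 1/((N:ℝ)+1) := min_le_right _ _
  obtain ⟨δ, hδ0, hδ⟩ := f₀.uniform_continuity (γ/4) (by positivity)
  set P : ℕ := ⌈1/δ⌉₊ + 1 with hPdef
  have hP : 0 < P := Nat.succ_pos _
  have hPR : 1/δ < (P:ℝ) := by
    have := Nat.le_ceil (1/δ)
    have h2 : ((⌈1/δ⌉₊ : ℕ) : ℝ) + 1 = (P:ℝ) := by push_cast [hPdef]; ring
    linarith
  have hPpos : (0:ℝ) < (P:ℝ) := by exact_mod_cast hP
  have hPδ : 1/(P:ℝ) < δ := by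
    rw [div_lt_iff₀ hPpos]
    rw [div_lt_iff₀ hδ0] at hPR
    linarith
  have hFdist : ∀ a b : ℝ, |a - b| ≤ 1/(P:ℝ) → |F a - F b| ≤ γ/4 := by
    intro a b hab
    have h1 : dist (Set.projIcc (0:ℝ) 1 zero_le_one a) (Set.projIcc (0:ℝ) 1 zero_le_one b)
        ≤ dist a b := by
      simpa using (LipschitzWith.projIcc (a := (0:ℝ)) (b := 1) zero_le_one).dist_le_mul a b
    have h2 : dist a b < δ := by rw [Real.dist_eq]; linarith
    have := hδ (lt_of_le_of_lt h1 h2)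
    rw [Real.dist_eq] at this
    exact le_of_lt this
  set W : ℕ → ℤ := Wseq γ F P with hWdef
  have hstep : ∀ i, W (i+1) = W i + 1 ∨ W (i+1) = W i - 1 := Wseq_step γ F P
  have hpar : ∀ i : ℕ, ∃ k : ℤ, W i - i = 2 * k := Wseq_parity γ F P
  have happrox : ∀ i : ℕ, i ≤ P → |γ/2 * (W i) - F ((i:ℝ)/(P:ℝ))| ≤ 3*γ/4 := by
    apply Wseq_approx γ hγ F P
    intro i hi
    apply hFdist
    rw [show ((i:ℝ)+1)/(P:ℝ) - (i:ℝ)/(P:ℝ) = 1/(P:ℝ) by field_simp; ring]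
    rw [abs_of_pos (by positivity)]
  set fC : C(Set.Icc (0:ℝ) 1, ℝ) :=
    ⟨fun x => zig γ P W (x:ℝ), (zig_continuous γ P W).comp continuous_subtype_val⟩ with hfCdef
  -- pointwise approximation
  have hclose : ∀ x : Set.Icc (0:ℝ) 1, |fC x - f₀ x| ≤ 3*γ/2 := by
    intro x
    obtain ⟨i, hiP, hl, hr⟩ := exists_piece hP x.2.1 x.2.2
    have hz := zig_piece γ P W hiP hl hr
    have hone : |(W (i+1) : ℝ) - (W i : ℝ)| = 1 := by
      rcases hstep i with h | h <;> rw [h] <;> push_cast <;> simp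
    have h1 : |zig γ P W (x:ℝ) - γ/2 * (W i)| ≤ γ/2 := by
      rw [hz]
      rw [show γ/2 * (W i : ℝ) + γ/2 * ((W (i+1) : ℝ) - (W i : ℝ)) * ((P:ℝ)*(x:ℝ) - i)
        - γ/2 * (W i : ℝ) = γ/2 * (((W (i+1) : ℝ) - (W i : ℝ)) * ((P:ℝ)*(x:ℝ) - i)) by ring]
      rw [abs_mul, abs_mul, hone, one_mul, abs_of_pos (by positivity : (0:ℝ) < γ/2)]
      have : |(P:ℝ)*(x:ℝ) - i| ≤ 1 := by rw [abs_le]; constructor <;> linarith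
      nlinarith
    have h2 := happrox i (le_of_lt hiP)
    have h3 : |F ((i:ℝ)/(P:ℝ)) - F (x:ℝ)| ≤ γ/4 := by
      apply hFdist
      have hx1 : (i:ℝ)/(P:ℝ) ≤ (x:ℝ) := by rw [div_le_iff₀ hPpos]; linarith
      have hx2 : (x:ℝ) ≤ ((i:ℝ)+1)/(P:ℝ) := by rw [le_div_iff₀ hPpos]; linarith
      have hgap : ((i:ℝ)+1)/(P:ℝ) - (i:ℝ)/(P:ℝ) = 1/(P:ℝ) := by field_simp; ring
      rw [abs_le]
      constructor <;> linarith
    have hFx : F (x:ℝ) = f₀ x := by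
      rw [hFdef]
      simp [Set.projIcc_val]
    have : |fC x - f₀ x| ≤ γ/2 + 3*γ/4 + γ/4 := by
      rw [← hFx]
      have hfCx : fC x = zig γ P W (x:ℝ) := rfl
      rw [hfCx]
      have t1 := abs_sub_le (zig γ P W (x:ℝ)) (γ/2 * (W i)) (F ((i:ℝ)/(P:ℝ)))
      have t2 := abs_sub_le (zig γ P W (x:ℝ)) (F ((i:ℝ)/(P:ℝ))) (F (x:ℝ))
      linarith
    linarith
  have hdistC : dist fC f₀ < ε := by
    have : dist fC f₀ ≤ 3*γ/2 := by
      rw [ContinuousMap.dist_le (by positivity)]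
      intro x
      rw [Real.dist_eq]
      exact hclose x
    linarith
  refine ⟨fC, Metric.mem_ball.mpr hdistC, γ/3000, by positivity, ?_⟩
  intro f' hf'
  have hdist : dist f' fC < γ/3000 := Metric.mem_ball.mp hf'
  have hN1 : ((N:ℝ)) ≤ 1/γ := by
    have h1 : (0:ℝ) < (N:ℝ)+1 := by positivity
    rw [le_div_iff₀ h1] at hγN
    rw [le_div_iff₀ hγ]
    nlinarith
  have h12 : (1:ℝ)/γ ≤ 2/γ := by gcongr; norm_num
  have hv : ∀ q : ℝ × ℝ, q.2 = 1/γ ∨ q.2 = 2/γ → (N:ℝ) ≤ ‖q‖ := by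
    rintro q (h|h) <;>
    · refine le_trans ?_ (norm_snd_le _)
      rw [h, Real.norm_eq_abs, abs_of_pos (by positivity)]
      first
        | exact hN1
        | linarith
  refine ⟨![(-(P:ℝ)/2, 1/γ), (-(P:ℝ), 2/γ), ((P:ℝ)/2, 1/γ), ((P:ℝ), 2/γ)], ?_, ?_⟩
  · intro i
    fin_cases i
    · exact hv _ (Or.inl rfl)
    · exact hv _ (Or.inr rfl)
    · exact hv _ (Or.inl rfl)
    · exact hv _ (Or.inr rfl)
  · intro μ hμ hsupp
    have hptw : ∀ p : ℝ×ℝ, p ∈ graphOf f' → (17/20:ℝ) ≤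
          Real.cos (2*Real.pi*(p.1*(-(P:ℝ)/2) + p.2*(1/γ)))
        + Real.cos (2*Real.pi*(p.1*(-(P:ℝ)) + p.2*(2/γ)))
        + Real.cos (2*Real.pi*(p.1*((P:ℝ)/2) + p.2*(1/γ)))
        + Real.cos (2*Real.pi*(p.1*((P:ℝ)) + p.2*(2/γ))) := by
      rintro p ⟨x, hp1, hp2⟩
      have hm := master γ hγ P hP W hstep hpar x.2.1 x.2.2
      have hfx : |p.2 - zig γ P W (x:ℝ)| ≤ γ/3000 := by
        rw [hp2]
        have h := ContinuousMap.dist_apply_le_dist (f := f') (g := fC) x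
        rw [Real.dist_eq] at h
        exact le_of_lt (lt_of_le_of_lt h hdist)
      have hkey : ∀ c1 c2 : ℝ, |c2| ≤ 2/γ →
          Real.cos (2*Real.pi*((x:ℝ)*c1 + zig γ P W (x:ℝ)*c2)) - 1/160
            ≤ Real.cos (2*Real.pi*(p.1*c1 + p.2*c2)) := by
        intro c1 c2 hc2
        have hd := abs_cos_sub_cos_le (2*Real.pi*(p.1*c1 + p.2*c2))
          (2*Real.pi*((x:ℝ)*c1 + zig γ P W (x:ℝ)*c2))
        have hargs : |2*Real.pi*(p.1*c1 + p.2*c2) - 2*Real.pi*((x:ℝ)*c1 + zig γ P W (x:ℝ)*c2)|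
            = (2*Real.pi*|c2|) * |p.2 - zig γ P W (x:ℝ)| := by
          rw [hp1]
          rw [show 2*Real.pi*((x:ℝ)*c1 + p.2*c2) - 2*Real.pi*((x:ℝ)*c1 + zig γ P W (x:ℝ)*c2)
            = (2*Real.pi*c2) * (p.2 - zig γ P W (x:ℝ)) by ring]
          rw [abs_mul]
          congr 1
          rw [abs_mul]
          rw [abs_of_pos (by positivity : (0:ℝ) < 2*Real.pi)]
        have hbound : (2*Real.pi*|c2|) * |p.2 - zig γ P W (x:ℝ)| ≤ 1/160 := by
          have hπ4 : Real.pi ≤ 4 := Real.pi_le_four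
          have habs0 : (0:ℝ) ≤ |p.2 - zig γ P W (x:ℝ)| := abs_nonneg _
          have hc20 : (0:ℝ) ≤ |c2| := abs_nonneg _
          have step1 : (2*Real.pi*|c2|) * |p.2 - zig γ P W (x:ℝ)| ≤ (8*(2/γ)) * (γ/3000) := by
            apply mul_le_mul
            · nlinarith [Real.pi_pos]
            · exact hfx
            · exact habs0
            · positivity
          have : (8*(2/γ)) * (γ/3000) = 16/3000 := by field_simp; norm_num
          rw [this] at step1
          linarith
        have h1 : |Real.cos (2*Real.pi*(p.1*c1 + p.2*c2))
            - Real.cos (2*Real.pi*((x:ℝ)*c1 + zig γ P W (x:ℝ)*c2))| ≤ 1/160 := by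
          rw [hargs] at hd
          linarith
        have h2 := abs_le.mp h1
        linarith [h2.1]
      have hpos2 : (0:ℝ) < 2/γ := by positivity
      have k1 := hkey (-(P:ℝ)/2) (1/γ) (by rw [abs_of_pos (by positivity)]; exact h12)
      have k2 := hkey (-(P:ℝ)) (2/γ) (le_of_eq (abs_of_pos hpos2))
      have k3 := hkey ((P:ℝ)/2) (1/γ) (by rw [abs_of_pos (by positivity)]; exact h12)
      have k4 := hkey ((P:ℝ)) (2/γ) (le_of_eq (abs_of_pos hpos2))
      linarith
    have hae : ∀ᵐ p ∂μ, p ∈ graphOf f' := by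
      rw [MeasureTheory.ae_iff]
      exact hsupp
    have haebd : ∀ᵐ p ∂μ, (fun _ : ℝ×ℝ => (17/20:ℝ)) p ≤ (fun p : ℝ×ℝ =>
          Real.cos (2*Real.pi*(p.1*(-(P:ℝ)/2) + p.2*(1/γ)))
        + Real.cos (2*Real.pi*(p.1*(-(P:ℝ)) + p.2*(2/γ)))
        + Real.cos (2*Real.pi*(p.1*((P:ℝ)/2) + p.2*(1/γ)))
        + Real.cos (2*Real.pi*(p.1*((P:ℝ)) + p.2*(2/γ)))) p := by
      filter_upwards [hae] with p hp
      exact hptw p hp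
    have hi1 : Integrable (fun p : ℝ×ℝ =>
        Real.cos (2*Real.pi*(p.1*(-(P:ℝ)/2) + p.2*(1/γ)))) μ :=
      integrable_cos_phase μ ((-(P:ℝ)/2, 1/γ))
    have hi2 : Integrable (fun p : ℝ×ℝ =>
        Real.cos (2*Real.pi*(p.1*(-(P:ℝ)) + p.2*(2/γ)))) μ :=
      integrable_cos_phase μ ((-(P:ℝ), 2/γ))
    have hi3 : Integrable (fun p : ℝ×ℝ =>
        Real.cos (2*Real.pi*(p.1*((P:ℝ)/2) + p.2*(1/γ)))) μ :=
      integrable_cos_phase μ (((P:ℝ)/2, 1/γ))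
    have hi4 : Integrable (fun p : ℝ×ℝ =>
        Real.cos (2*Real.pi*(p.1*((P:ℝ)) + p.2*(2/γ)))) μ :=
      integrable_cos_phase μ (((P:ℝ), 2/γ))
    have e1 : (ft2 μ ((-(P:ℝ)/2, 1/γ))).re
        = ∫ p, Real.cos (2*Real.pi*(p.1*(-(P:ℝ)/2) + p.2*(1/γ))) ∂μ := re_ft2 μ _
    have e2 : (ft2 μ ((-(P:ℝ), 2/γ))).re
        = ∫ p, Real.cos (2*Real.pi*(p.1*(-(P:ℝ)) + p.2*(2/γ))) ∂μ := re_ft2 μ _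
    have e3 : (ft2 μ (((P:ℝ)/2, 1/γ))).re
        = ∫ p, Real.cos (2*Real.pi*(p.1*((P:ℝ)/2) + p.2*(1/γ))) ∂μ := re_ft2 μ _
    have e4 : (ft2 μ (((P:ℝ), 2/γ))).re
        = ∫ p, Real.cos (2*Real.pi*(p.1*((P:ℝ)) + p.2*(2/γ))) ∂μ := re_ft2 μ _
    have hIle : (17/20:ℝ) ≤ ∫ p, (Real.cos (2*Real.pi*(p.1*(-(P:ℝ)/2) + p.2*(1/γ)))
        + Real.cos (2*Real.pi*(p.1*(-(P:ℝ)) + p.2*(2/γ)))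
        + Real.cos (2*Real.pi*(p.1*((P:ℝ)/2) + p.2*(1/γ)))
        + Real.cos (2*Real.pi*(p.1*((P:ℝ)) + p.2*(2/γ)))) ∂μ := by
      have hint : Integrable (fun p : ℝ×ℝ =>
            Real.cos (2*Real.pi*(p.1*(-(P:ℝ)/2) + p.2*(1/γ)))
          + Real.cos (2*Real.pi*(p.1*(-(P:ℝ)) + p.2*(2/γ)))
          + Real.cos (2*Real.pi*(p.1*((P:ℝ)/2) + p.2*(1/γ)))
          + Real.cos (2*Real.pi*(p.1*((P:ℝ)) + p.2*(2/γ)))) μ :=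
        ((hi1.add hi2).add hi3).add hi4
      have := MeasureTheory.integral_mono_ae (integrable_const (17/20:ℝ)) hint haebd
      simpa [measure_univ] using this
    have hsplit : ∫ p, (Real.cos (2*Real.pi*(p.1*(-(P:ℝ)/2) + p.2*(1/γ)))
        + Real.cos (2*Real.pi*(p.1*(-(P:ℝ)) + p.2*(2/γ)))
        + Real.cos (2*Real.pi*(p.1*((P:ℝ)/2) + p.2*(1/γ)))
        + Real.cos (2*Real.pi*(p.1*((P:ℝ)) + p.2*(2/γ)))) ∂μ
        = (ft2 μ ((-(P:ℝ)/2, 1/γ))).re + (ft2 μ ((-(P:ℝ), 2/γ))).re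
          + (ft2 μ (((P:ℝ)/2, 1/γ))).re + (ft2 μ (((P:ℝ), 2/γ))).re := by
      have hi12 : Integrable (fun p : ℝ×ℝ =>
          Real.cos (2*Real.pi*(p.1*(-(P:ℝ)/2) + p.2*(1/γ)))
          + Real.cos (2*Real.pi*(p.1*(-(P:ℝ)) + p.2*(2/γ)))) μ := hi1.add hi2
      have hi123 : Integrable (fun p : ℝ×ℝ =>
          Real.cos (2*Real.pi*(p.1*(-(P:ℝ)/2) + p.2*(1/γ)))
          + Real.cos (2*Real.pi*(p.1*(-(P:ℝ)) + p.2*(2/γ)))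
          + Real.cos (2*Real.pi*(p.1*((P:ℝ)/2) + p.2*(1/γ)))) μ := hi12.add hi3
      have s1 : ∫ p, (Real.cos (2*Real.pi*(p.1*(-(P:ℝ)/2) + p.2*(1/γ)))
          + Real.cos (2*Real.pi*(p.1*(-(P:ℝ)) + p.2*(2/γ)))
          + Real.cos (2*Real.pi*(p.1*((P:ℝ)/2) + p.2*(1/γ)))
          + Real.cos (2*Real.pi*(p.1*((P:ℝ)) + p.2*(2/γ)))) ∂μ
          = (∫ p, (Real.cos (2*Real.pi*(p.1*(-(P:ℝ)/2) + p.2*(1/γ)))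
          + Real.cos (2*Real.pi*(p.1*(-(P:ℝ)) + p.2*(2/γ)))
          + Real.cos (2*Real.pi*(p.1*((P:ℝ)/2) + p.2*(1/γ)))) ∂μ)
          + ∫ p, Real.cos (2*Real.pi*(p.1*((P:ℝ)) + p.2*(2/γ))) ∂μ :=
        MeasureTheory.integral_add hi123 hi4
      have s2 : ∫ p, (Real.cos (2*Real.pi*(p.1*(-(P:ℝ)/2) + p.2*(1/γ)))
          + Real.cos (2*Real.pi*(p.1*(-(P:ℝ)) + p.2*(2/γ)))
          + Real.cos (2*Real.pi*(p.1*((P:ℝ)/2) + p.2*(1/γ)))) ∂μ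
          = (∫ p, (Real.cos (2*Real.pi*(p.1*(-(P:ℝ)/2) + p.2*(1/γ)))
          + Real.cos (2*Real.pi*(p.1*(-(P:ℝ)) + p.2*(2/γ)))) ∂μ)
          + ∫ p, Real.cos (2*Real.pi*(p.1*((P:ℝ)/2) + p.2*(1/γ))) ∂μ :=
        MeasureTheory.integral_add hi12 hi3
      have s3 : ∫ p, (Real.cos (2*Real.pi*(p.1*(-(P:ℝ)/2) + p.2*(1/γ)))
          + Real.cos (2*Real.pi*(p.1*(-(P:ℝ)) + p.2*(2/γ)))) ∂μ
          = (∫ p, Real.cos (2*Real.pi*(p.1*(-(P:ℝ)/2) + p.2*(1/γ))) ∂μ)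
          + ∫ p, Real.cos (2*Real.pi*(p.1*(-(P:ℝ)) + p.2*(2/γ))) ∂μ :=
        MeasureTheory.integral_add hi1 hi2
      rw [s1, s2, s3, e1, e2, e3, e4]
    rw [hsplit] at hIle
    by_contra hcon
    push_neg at hcon
    have c1 := hcon 0
    have c2 := hcon 1
    have c3 := hcon 2
    have c4 := hcon 3
    simp only [Matrix.cons_val_zero, Matrix.cons_val_one, Matrix.head_cons,
      Matrix.cons_val_two, Matrix.tail_cons, Matrix.cons_val_three] at c1 c2 c3 c4
    linarith

theorem typical_no_decay :
    {f : C(Set.Icc (0:ℝ) 1, ℝ) |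
      ∀ μ : Measure (ℝ × ℝ), IsProbabilityMeasure μ → μ (graphOf f)ᶜ = 0 →
        (1 / 5 : ℝ) ≤ Filter.limsup (fun ξ : ℝ × ℝ => ‖ft2 μ ξ‖) (cocompact (ℝ × ℝ))}
      ∈ residual C(Set.Icc (0:ℝ) 1, ℝ) := by
  have hres : (⋂ N : ℕ, Good N) ∈ residual C(Set.Icc (0:ℝ) 1, ℝ) :=
    (countable_iInter_mem.mpr fun N => residual_of_dense_open (good_open N) (good_dense N))
  exact Filter.mem_of_superset hres inter_good_subset
end

section
/- For a typical function f ∈ C[0,1] (in the Baire category sense), the Fourier dimension of the graph G_f equals zero. -/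
open MeasureTheory Filter Set

/-- The Fourier dimension of a subset of the plane. -/
noncomputable def fourierDim2 (K : Set (ℝ × ℝ)) : ℝ :=
  sSup {s : ℝ | 0 ≤ s ∧ s ≤ 2 ∧ ∃ (μ : Measure (ℝ × ℝ)) (C : ℝ),
    IsProbabilityMeasure μ ∧ μ Kᶜ = 0 ∧ 0 < C ∧
    ∀ ξ : ℝ × ℝ, ξ ≠ 0 → ‖ft2 μ ξ‖ ≤ C * enorm2 ξ ^ (-s / 2)}

namespace FDim

lemma arg_eq (t : ℝ) : (-2 * (Real.pi:ℂ) * Complex.I * (t : ℂ)) = ((-(2*Real.pi*t) : ℝ) : ℂ) * Complex.I := by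
  push_cast; ring

lemma integrable_exp (μ : Measure (ℝ × ℝ)) [IsProbabilityMeasure μ] (ξ : ℝ × ℝ) :
    Integrable (fun p : ℝ × ℝ =>
      Complex.exp (-2 * Real.pi * Complex.I * ((p.1 * ξ.1 + p.2 * ξ.2 : ℝ) : ℂ))) μ := by
  have hc : Continuous fun p : ℝ × ℝ =>
      Complex.exp (-2 * Real.pi * Complex.I * ((p.1 * ξ.1 + p.2 * ξ.2 : ℝ) : ℂ)) := by
    fun_prop
  refine (integrable_const (1:ℝ)).mono' hc.aestronglyMeasurable (ae_of_all _ fun p => ?_)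
  rw [arg_eq, Complex.norm_exp_ofReal_mul_I]

lemma integrable_cos (μ : Measure (ℝ × ℝ)) [IsProbabilityMeasure μ] {g : ℝ × ℝ → ℝ}
    (hg : Continuous g) : Integrable (fun p => Real.cos (g p)) μ := by
  refine (integrable_const (1:ℝ)).mono' (Real.continuous_cos.comp hg).aestronglyMeasurable
    (ae_of_all _ fun p => ?_)
  rw [Real.norm_eq_abs]; exact Real.abs_cos_le_one _

lemma re_ft2 (μ : Measure (ℝ × ℝ)) [IsProbabilityMeasure μ] (ξ : ℝ × ℝ) :
    (ft2 μ ξ).re = ∫ p, Real.cos (2*Real.pi*(p.1*ξ.1 + p.2*ξ.2)) ∂μ := by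
  have h := integral_re (integrable_exp μ ξ)
  simp only [RCLike.re_to_complex] at h
  rw [ft2, ← h]
  refine integral_congr_ae (ae_of_all _ fun p => ?_)
  show (Complex.exp _).re = _
  rw [show (-2 * (Real.pi:ℂ) * Complex.I * ((p.1 * ξ.1 + p.2 * ξ.2 : ℝ) : ℂ))
      = ((-(2*Real.pi*(p.1 * ξ.1 + p.2 * ξ.2)) : ℝ) : ℂ) * Complex.I from arg_eq _,
    Complex.exp_ofReal_mul_I_re, Real.cos_neg]

lemma re_ft2_vert (μ : Measure (ℝ × ℝ)) [IsProbabilityMeasure μ] (c : ℝ) :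
    (ft2 μ ((0:ℝ), c)).re = ∫ p, Real.cos (2*Real.pi*(p.2*c)) ∂μ := by
  rw [re_ft2]
  refine integral_congr_ae (ae_of_all _ fun p => ?_)
  norm_num

lemma re_ft2_horiz (μ : Measure (ℝ × ℝ)) [IsProbabilityMeasure μ] (b : ℝ) :
    (ft2 μ ((b:ℝ), (0:ℝ))).re = ∫ p, Real.cos (2*Real.pi*(p.1*b)) ∂μ := by
  rw [re_ft2]
  refine integral_congr_ae (ae_of_all _ fun p => ?_)
  norm_num

lemma re_le_norm (z : ℂ) : z.re ≤ ‖z‖ :=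
  le_trans (le_abs_self _) (by exact Complex.abs_re_le_norm z)

lemma pointwise_bound {u v : ℝ} (h : 99/100 < u ∨ 99/100 < v) (hu' : u ≤ 1) (hv' : v ≤ 1) :
    (12:ℝ)/25 ≤ (2*u + (2*u^2-1) + (2*v + (2*v^2-1)))/3 := by
  rcases h with h | h
  · nlinarith [sq_nonneg (v + 1/2), sq_nonneg (u - 99/100)]
  · nlinarith [sq_nonneg (u + 1/2), sq_nonneg (v - 99/100)]

def U (P Q : ℕ) : Set C(Set.Icc (0:ℝ) 1, ℝ) :=
  {f | ∀ x : Set.Icc (0:ℝ) 1,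
    99/100 < Real.cos (2*Real.pi*Q*(f x)) ∨ 99/100 < Real.cos (2*Real.pi*P*(x:ℝ))}

lemma key {P Q k : ℕ} (hP : k+1 ≤ P) (hQ : k+1 ≤ Q)
    {f : C(Set.Icc (0:ℝ) 1, ℝ)} (hf : f ∈ U P Q)
    (μ : Measure (ℝ × ℝ)) [IsProbabilityMeasure μ] (hμ : μ (graphOf f)ᶜ = 0) :
    ∃ ξ : ℝ × ℝ, ξ ≠ 0 ∧ (k:ℝ)+1 ≤ enorm2 ξ ∧ 1/5 ≤ ‖ft2 μ ξ‖ := by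
  by_contra hcon
  push_neg at hcon
  have hQR : ((k:ℝ)+1) ≤ (Q:ℝ) := by exact_mod_cast hQ
  have hPR : ((k:ℝ)+1) ≤ (P:ℝ) := by exact_mod_cast hP
  have hQ0 : (0:ℝ) < (Q:ℝ) := by exact_mod_cast lt_of_lt_of_le (Nat.succ_pos k) hQ
  have hP0 : (0:ℝ) < (P:ℝ) := by exact_mod_cast lt_of_lt_of_le (Nat.succ_pos k) hP
  have hk1 : (0:ℝ) ≤ (k:ℝ)+1 := by positivity
  -- enorm computations
  have envert : ∀ c : ℝ, 0 ≤ c → enorm2 ((0:ℝ), c) = c := by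
    intro c hc
    show Real.sqrt ((0:ℝ)^2 + c^2) = c
    rw [show (0:ℝ)^2 + c^2 = c^2 by ring, Real.sqrt_sq hc]
  have enhoriz : ∀ b : ℝ, 0 ≤ b → enorm2 (b, (0:ℝ)) = b := by
    intro b hb
    show Real.sqrt (b^2 + (0:ℝ)^2) = b
    rw [show b^2 + (0:ℝ)^2 = b^2 by ring, Real.sqrt_sq hb]
  -- the four frequencies, with norm bounds
  have n1 : ‖ft2 μ ((0:ℝ), (Q:ℝ))‖ < 1/5 := by
    refine hcon _ (fun h => ?_) ?_
    · exact absurd (congrArg Prod.snd h) (by simpa using hQ0.ne')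
    · rw [envert _ hQ0.le]; exact hQR
  have n2 : ‖ft2 μ ((0:ℝ), 2*(Q:ℝ))‖ < 1/5 := by
    refine hcon _ (fun h => ?_) ?_
    · exact absurd (congrArg Prod.snd h) (by simpa using (by positivity : (0:ℝ) < 2*Q).ne')
    · rw [envert _ (by positivity)]; linarith
  have n3 : ‖ft2 μ ((P:ℝ), (0:ℝ))‖ < 1/5 := by
    refine hcon _ (fun h => ?_) ?_
    · exact absurd (congrArg Prod.fst h) (by simpa using hP0.ne')
    · rw [enhoriz _ hP0.le]; exact hPR
  have n4 : ‖ft2 μ (2*(P:ℝ), (0:ℝ))‖ < 1/5 := by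
    refine hcon _ (fun h => ?_) ?_
    · exact absurd (congrArg Prod.fst h) (by simpa using (by positivity : (0:ℝ) < 2*P).ne')
    · rw [enhoriz _ (by positivity)]; linarith
  -- integrability
  have i1 : Integrable (fun p : ℝ×ℝ => Real.cos (2*Real.pi*(p.2*(Q:ℝ)))) μ :=
    integrable_cos μ (by fun_prop)
  have i2 : Integrable (fun p : ℝ×ℝ => Real.cos (2*Real.pi*(p.2*(2*(Q:ℝ))))) μ :=
    integrable_cos μ (by fun_prop)
  have i3 : Integrable (fun p : ℝ×ℝ => Real.cos (2*Real.pi*(p.1*(P:ℝ)))) μ :=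
    integrable_cos μ (by fun_prop)
  have i4 : Integrable (fun p : ℝ×ℝ => Real.cos (2*Real.pi*(p.1*(2*(P:ℝ))))) μ :=
    integrable_cos μ (by fun_prop)
  have i12 : Integrable (fun p : ℝ×ℝ => 2*Real.cos (2*Real.pi*(p.2*(Q:ℝ))) + Real.cos (2*Real.pi*(p.2*(2*(Q:ℝ))))) μ :=
    (i1.const_mul 2).add i2
  have i34 : Integrable (fun p : ℝ×ℝ => 2*Real.cos (2*Real.pi*(p.1*(P:ℝ))) + Real.cos (2*Real.pi*(p.1*(2*(P:ℝ))))) μ :=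
    (i3.const_mul 2).add i4
  have iG : Integrable (fun p : ℝ×ℝ =>
      (2*Real.cos (2*Real.pi*(p.2*(Q:ℝ))) + Real.cos (2*Real.pi*(p.2*(2*(Q:ℝ))))
        + (2*Real.cos (2*Real.pi*(p.1*(P:ℝ))) + Real.cos (2*Real.pi*(p.1*(2*(P:ℝ))))))/3) μ :=
    (((i1.const_mul 2).add i2).add ((i3.const_mul 2).add i4)).div_const 3
  -- pointwise a.e. bound
  have hae : ∀ᵐ p ∂μ, p ∈ graphOf f := mem_ae_iff.2 hμ
  have hptwise : ∀ᵐ p ∂μ, (12:ℝ)/25 ≤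
      (2*Real.cos (2*Real.pi*(p.2*(Q:ℝ))) + Real.cos (2*Real.pi*(p.2*(2*(Q:ℝ))))
        + (2*Real.cos (2*Real.pi*(p.1*(P:ℝ))) + Real.cos (2*Real.pi*(p.1*(2*(P:ℝ))))))/3 := by
    filter_upwards [hae] with p hp
    obtain ⟨x, hx1, hx2⟩ := hp
    have e1 : 2*Real.pi*(p.2*(Q:ℝ)) = 2*Real.pi*(Q:ℝ)*(f x) := by rw [hx2]; ring
    have e2 : 2*Real.pi*(p.2*(2*(Q:ℝ))) = 2*(2*Real.pi*(Q:ℝ)*(f x)) := by rw [hx2]; ring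
    have e3 : 2*Real.pi*(p.1*(P:ℝ)) = 2*Real.pi*(P:ℝ)*(x:ℝ) := by rw [hx1]; ring
    have e4 : 2*Real.pi*(p.1*(2*(P:ℝ))) = 2*(2*Real.pi*(P:ℝ)*(x:ℝ)) := by rw [hx1]; ring
    rw [e1, e2, e3, e4, Real.cos_two_mul, Real.cos_two_mul]
    exact pointwise_bound (hf x) (Real.cos_le_one _) (Real.cos_le_one _)
  have hlow : (12:ℝ)/25 ≤ ∫ p, (2*Real.cos (2*Real.pi*(p.2*(Q:ℝ))) + Real.cos (2*Real.pi*(p.2*(2*(Q:ℝ))))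
        + (2*Real.cos (2*Real.pi*(p.1*(P:ℝ))) + Real.cos (2*Real.pi*(p.1*(2*(P:ℝ))))))/3 ∂μ := by
    have := integral_mono_ae (integrable_const ((12:ℝ)/25)) iG hptwise
    simpa [integral_const] using this
  have hsplit : ∫ p, (2*Real.cos (2*Real.pi*(p.2*(Q:ℝ))) + Real.cos (2*Real.pi*(p.2*(2*(Q:ℝ))))
        + (2*Real.cos (2*Real.pi*(p.1*(P:ℝ))) + Real.cos (2*Real.pi*(p.1*(2*(P:ℝ))))))/3 ∂μ
      = (2*(∫ p, Real.cos (2*Real.pi*(p.2*(Q:ℝ))) ∂μ) + (∫ p, Real.cos (2*Real.pi*(p.2*(2*(Q:ℝ)))) ∂μ)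
        + (2*(∫ p, Real.cos (2*Real.pi*(p.1*(P:ℝ))) ∂μ) + (∫ p, Real.cos (2*Real.pi*(p.1*(2*(P:ℝ)))) ∂μ)))/3 := by
    rw [integral_div, integral_add i12 i34, integral_add (i1.const_mul 2) i2,
      integral_add (i3.const_mul 2) i4, integral_const_mul, integral_const_mul]
  rw [hsplit] at hlow
  have r1 := re_ft2_vert μ (Q:ℝ)
  have r2 := re_ft2_vert μ (2*(Q:ℝ))
  have r3 := re_ft2_horiz μ (P:ℝ)
  have r4 := re_ft2_horiz μ (2*(P:ℝ))
  have b1 := lt_of_le_of_lt (re_le_norm _) n1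
  have b2 := lt_of_le_of_lt (re_le_norm _) n2
  have b3 := lt_of_le_of_lt (re_le_norm _) n3
  have b4 := lt_of_le_of_lt (re_le_norm _) n4
  rw [r1] at b1; rw [r2] at b2; rw [r3] at b3; rw [r4] at b4
  linarith




lemma cos_lip (a b : ℝ) : |Real.cos a - Real.cos b| ≤ |a - b| := by
  rw [Real.cos_sub_cos]
  have h1 : |Real.sin ((a+b)/2)| ≤ 1 := abs_le.2 ⟨Real.neg_one_le_sin _, Real.sin_le_one _⟩
  have h2 : |Real.sin ((a-b)/2)| ≤ |(a-b)/2| := Real.abs_sin_le_abs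
  have h3 : |(a-b)/2| = |a-b|/2 := by rw [abs_div]; norm_num
  rw [abs_mul, abs_mul]
  rw [h3] at h2
  have h4 : |(-2 : ℝ)| = 2 := by norm_num
  rw [h4]
  nlinarith [abs_nonneg (Real.sin ((a+b)/2)), abs_nonneg (Real.sin ((a-b)/2)), abs_nonneg (a-b)]

lemma isOpen_U (P Q : ℕ) : IsOpen (U P Q) := by
  rw [Metric.isOpen_iff]
  intro f hf
  set K : Set (Set.Icc (0:ℝ) 1) := {x | Real.cos (2*Real.pi*P*(x:ℝ)) ≤ 99/100} with hK
  have hKc : IsClosed K := isClosed_le (by fun_prop) continuous_const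
  have hcont : Continuous fun x : Set.Icc (0:ℝ) 1 => Real.cos (2*Real.pi*Q*(f x)) := by
    fun_prop
  rcases K.eq_empty_or_nonempty with hKe | hKne
  · refine ⟨1, one_pos, fun g _ => ?_⟩
    intro x
    right
    by_contra h
    push_neg at h
    have : x ∈ K := h
    rw [hKe] at this
    exact this
  · obtain ⟨x₀, hx₀K, hx₀min⟩ := hKc.isCompact.exists_isMinOn hKne hcont.continuousOn
    have hm : 99/100 < Real.cos (2*Real.pi*Q*(f x₀)) := by
      rcases hf x₀ with h | h
      · exact h
      · exact absurd h (not_lt.2 hx₀K)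
    set m := Real.cos (2*Real.pi*Q*(f x₀)) with hmdef
    have hden : (0:ℝ) < 2*Real.pi*Q+1 := by positivity
    refine ⟨(m - 99/100)/(2*Real.pi*Q+1), div_pos (by linarith) hden, fun g hg => ?_⟩
    intro x
    by_cases hx : x ∈ K
    · left
      have hfx : m ≤ Real.cos (2*Real.pi*Q*(f x)) := hx₀min hx
      have hd : |Real.cos (2*Real.pi*Q*(g x)) - Real.cos (2*Real.pi*Q*(f x))|
          ≤ 2*Real.pi*Q * dist g f := by
        refine le_trans (cos_lip _ _) ?_
        have : |2*Real.pi*(Q:ℝ)*(g x) - 2*Real.pi*(Q:ℝ)*(f x)| = 2*Real.pi*Q * |g x - f x| := by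
          rw [← mul_sub, abs_mul, abs_of_nonneg (by positivity : (0:ℝ) ≤ 2*Real.pi*(Q:ℝ))]
        rw [this]
        have := ContinuousMap.dist_apply_le_dist (f := g) (g := f) x
        rw [Real.dist_eq] at this
        exact mul_le_mul_of_nonneg_left this (by positivity)
      have hgd : dist g f < (m - 99/100)/(2*Real.pi*Q+1) := Metric.mem_ball.1 hg
      have h2 : 2*Real.pi*Q * dist g f < m - 99/100 := by
        calc 2*Real.pi*Q * dist g f ≤ (2*Real.pi*Q+1) * dist g f := by
              have := dist_nonneg (x := g) (y := f); nlinarith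
          _ < (2*Real.pi*Q+1) * ((m - 99/100)/(2*Real.pi*Q+1)) := by
              apply mul_lt_mul_of_pos_left hgd hden
          _ = m - 99/100 := by field_simp
      have := abs_le.1 hd
      linarith [this.1]
    · right
      exact lt_of_not_ge hx




noncomputable def rampF (N i : ℕ) (t : ℝ) : ℝ :=
  max 0 (min 1 (100*((N:ℝ)*t - ((i:ℝ)+1)) + 1))

lemma rampF_eq_one {N i : ℕ} {t : ℝ} (h : (i:ℝ)+1 ≤ (N:ℝ)*t) : rampF N i t = 1 := by
  unfold rampF
  rw [min_eq_left (by linarith), max_eq_right zero_le_one]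

lemma rampF_eq_zero {N i : ℕ} {t : ℝ} (h : (N:ℝ)*t ≤ (i:ℝ) + 99/100) : rampF N i t = 0 := by
  unfold rampF
  rw [max_eq_left]
  exact le_trans (min_le_right _ _) (by linarith)

lemma rampF_nonneg (N i : ℕ) (t : ℝ) : 0 ≤ rampF N i t := le_max_left _ _

lemma rampF_le_one (N i : ℕ) (t : ℝ) : rampF N i t ≤ 1 :=
  max_le zero_le_one (min_le_left _ _)

lemma continuous_rampF (N i : ℕ) : Continuous (rampF N i) := by
  unfold rampF
  fun_prop

noncomputable def stair (c : ℕ → ℝ) (N : ℕ) (t : ℝ) : ℝ :=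
  c 0 + ∑ i ∈ Finset.range N, (c (i+1) - c i) * rampF N i t

lemma continuous_stair (c : ℕ → ℝ) (N : ℕ) : Continuous (stair c N) := by
  unfold stair
  exact continuous_const.add (continuous_finset_sum _ fun i _ =>
    continuous_const.mul (continuous_rampF N i))

lemma stair_eval (c : ℕ → ℝ) {N j : ℕ} {t : ℝ} (hj1 : j+1 ≤ N)
    (hjt : (j:ℝ) ≤ (N:ℝ)*t) (htj : (N:ℝ)*t ≤ (j:ℝ)+1) :
    stair c N t = c j + (c (j+1) - c j) * rampF N j t := by
  unfold stair
  rw [← Finset.sum_range_add_sum_Ico _ hj1]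
  have hzero : ∑ i ∈ Finset.Ico (j+1) N, (c (i+1) - c i) * rampF N i t = 0 := by
    refine Finset.sum_eq_zero fun i hi => ?_
    have h1 : j+1 ≤ i := (Finset.mem_Ico.1 hi).1
    have h2 : ((j:ℝ)+1) ≤ (i:ℝ) := by exact_mod_cast h1
    rw [rampF_eq_zero (by linarith), mul_zero]
  rw [hzero, add_zero, Finset.sum_range_succ]
  have hones : ∑ i ∈ Finset.range j, (c (i+1) - c i) * rampF N i t
      = ∑ i ∈ Finset.range j, (c (i+1) - c i) := by
    refine Finset.sum_congr rfl fun i hi => ?_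
    have h1 : i < j := Finset.mem_range.1 hi
    have h2 : ((i:ℝ)+1) ≤ (j:ℝ) := by exact_mod_cast h1
    rw [rampF_eq_one (by linarith), mul_one]
  rw [hones, Finset.sum_range_sub]
  ring

lemma cos_near {t : ℝ} (hb : |t| ≤ 2*Real.pi/100) : 99/100 < Real.cos t := by
  have hcos := Real.one_sub_sq_div_two_le_cos (x := t)
  have hsq : t^2 ≤ (2*Real.pi/100)^2 := by
    rw [← sq_abs]
    exact pow_le_pow_left₀ (abs_nonneg _) hb 2
  nlinarith [Real.pi_le_four, Real.pi_pos]

lemma interp_abs {a b r B : ℝ} (h1 : |a| ≤ B) (h2 : |b| ≤ B) (h0 : 0 ≤ r) (hr : r ≤ 1) :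
    |a + (b - a)*r| ≤ B := by
  obtain ⟨h1l, h1r⟩ := abs_le.1 h1
  obtain ⟨h2l, h2r⟩ := abs_le.1 h2
  refine abs_le.2 ⟨by nlinarith, by nlinarith⟩

lemma dense_A (k : ℕ) :
    Dense (⋃ (P : ℕ) (_ : k+1 ≤ P) (Q : ℕ) (_ : k+1 ≤ Q), U P Q) := by
  rw [Metric.dense_iff]
  intro f ε hε
  -- uniform continuity
  have huc := Metric.uniformContinuous_iff.1
    (CompactSpace.uniformContinuous_of_continuous f.continuous)
  obtain ⟨δ, hδ, hucd⟩ := huc (ε/4) (by positivity)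
  -- choose Q
  obtain ⟨Q₀, hQ₀⟩ := exists_nat_ge (2/ε)
  set Q := max Q₀ (k+1) with hQdef
  have hQk : k+1 ≤ Q := le_max_right _ _
  have hQR : (2:ℝ)/ε ≤ (Q:ℝ) := le_trans hQ₀ (by exact_mod_cast le_max_left _ _)
  have hQpos : (0:ℝ) < (Q:ℝ) := by
    have : (1:ℕ) ≤ Q := le_trans (Nat.le_add_left 1 k) hQk
    exact_mod_cast Nat.lt_of_lt_of_le Nat.zero_lt_one this
  have hQinv : 1/(2*(Q:ℝ)) ≤ ε/4 := by
    rw [div_le_iff₀ (by positivity)]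
    have h2 : 2 ≤ ε * (Q:ℝ) := by
      rw [div_le_iff₀ hε] at hQR
      linarith [hQR]
    nlinarith
  -- choose N
  obtain ⟨N₀, hN₀⟩ := exists_nat_ge (1/δ + 1)
  set N := max N₀ (k+1) with hNdef
  have hNk : k+1 ≤ N := le_max_right _ _
  have hN1 : 1 ≤ N := le_trans (Nat.le_add_left 1 k) hNk
  have hNR : (1:ℝ)/δ + 1 ≤ (N:ℝ) := le_trans hN₀ (by exact_mod_cast le_max_left _ _)
  have hNpos : (0:ℝ) < (N:ℝ) := by positivity
  have hNinv : 1/(N:ℝ) < δ := by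
    rw [div_lt_iff₀ hNpos]
    have h1 : 1/δ < (N:ℝ) := by linarith
    rw [div_lt_iff₀ hδ] at h1
    linarith
  -- step values
  set c : ℕ → ℝ := fun i =>
    ((round ((Q:ℝ) * f (Set.projIcc (0:ℝ) 1 zero_le_one ((i:ℝ)/(N:ℝ)))) : ℤ) : ℝ) / (Q:ℝ)
    with hcdef
  set g : C(Set.Icc (0:ℝ) 1, ℝ) :=
    ⟨fun x => stair c N (x:ℝ), (continuous_stair c N).comp continuous_subtype_val⟩ with hgdef
  -- basic per-point facts
  have hmain : ∀ x : Set.Icc (0:ℝ) 1, ∃ j : ℕ, j+1 ≤ N ∧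
      (j:ℝ) ≤ (N:ℝ)*(x:ℝ) ∧ (N:ℝ)*(x:ℝ) ≤ (j:ℝ)+1 := by
    intro x
    obtain ⟨hx0, hx1⟩ := x.2
    by_cases hc : ⌊(x:ℝ)*(N:ℝ)⌋₊ ≤ N-1
    · refine ⟨⌊(x:ℝ)*(N:ℝ)⌋₊, by omega, ?_, ?_⟩
      · rw [mul_comm]; exact Nat.floor_le (by positivity)
      · rw [mul_comm]; exact le_of_lt (Nat.lt_floor_add_one _)
    · refine ⟨N-1, by omega, ?_, ?_⟩
      · push_neg at hc
        have : (N:ℝ) - 1 ≤ ((N-1 : ℕ) : ℝ) + 0 := by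
          rw [Nat.cast_sub hN1]; norm_num
        have h2 : ((N-1:ℕ):ℝ) + 1 ≤ (⌊(x:ℝ)*(N:ℝ)⌋₊ : ℝ) := by exact_mod_cast hc
        have h3 : ((⌊(x:ℝ)*(N:ℝ)⌋₊ : ℝ)) ≤ (x:ℝ)*(N:ℝ) := Nat.floor_le (by positivity)
        rw [mul_comm]
        linarith
      · have : ((N-1:ℕ):ℝ) + 1 = (N:ℝ) := by rw [Nat.cast_sub hN1]; ring
        rw [this, mul_comm]
        nlinarith
  have hgx : ∀ x : Set.Icc (0:ℝ) 1, g x = stair c N (x:ℝ) := fun x => rfl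
  -- nearness of step values
  have hcnear : ∀ (i : ℕ) (x : Set.Icc (0:ℝ) 1), i ≤ N →
      |(i:ℝ)/(N:ℝ) - (x:ℝ)| < δ → |c i - f x| ≤ 1/(2*(Q:ℝ)) + ε/4 := by
    intro i x hiN hnear
    have hmem : (i:ℝ)/(N:ℝ) ∈ Set.Icc (0:ℝ) 1 :=
      ⟨by positivity, by rw [div_le_one hNpos]; exact_mod_cast hiN⟩
    have hproj : Set.projIcc (0:ℝ) 1 zero_le_one ((i:ℝ)/(N:ℝ)) = ⟨(i:ℝ)/(N:ℝ), hmem⟩ :=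
      Set.projIcc_of_mem _ hmem
    have hci : c i = ((round ((Q:ℝ) * f ⟨(i:ℝ)/(N:ℝ), hmem⟩) : ℤ) : ℝ) / (Q:ℝ) := by
      rw [hcdef]; simp only [hproj]
    set y := (Q:ℝ) * f ⟨(i:ℝ)/(N:ℝ), hmem⟩ with hy
    have h1 : |c i - f ⟨(i:ℝ)/(N:ℝ), hmem⟩| ≤ 1/(2*(Q:ℝ)) := by
      have hr : |((round y : ℤ):ℝ) - y| ≤ 1/2 := by
        rw [abs_sub_comm]; exact abs_sub_round y
      have heq : c i - f ⟨(i:ℝ)/(N:ℝ), hmem⟩ = (((round y : ℤ):ℝ) - y)/(Q:ℝ) := by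
        rw [hci]
        field_simp
        rw [hy]
      rw [heq, abs_div, abs_of_pos hQpos, div_le_div_iff₀ hQpos (by positivity)]
      nlinarith
    have h2 : |f ⟨(i:ℝ)/(N:ℝ), hmem⟩ - f x| < ε/4 := by
      have hd : dist (⟨(i:ℝ)/(N:ℝ), hmem⟩ : Set.Icc (0:ℝ) 1) x < δ := by
        rw [Subtype.dist_eq, Real.dist_eq]; exact hnear
      have := hucd hd
      rwa [Real.dist_eq] at this
    calc |c i - f x| ≤ |c i - f ⟨(i:ℝ)/(N:ℝ), hmem⟩| + |f ⟨(i:ℝ)/(N:ℝ), hmem⟩ - f x| := by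
          have := abs_sub_le (c i) (f ⟨(i:ℝ)/(N:ℝ), hmem⟩) (f x); linarith
      _ ≤ 1/(2*(Q:ℝ)) + ε/4 := by linarith
  -- distance bound
  have hdist : dist g f < ε := by
    rw [ContinuousMap.dist_lt_iff hε]
    intro x
    obtain ⟨j, hj1, hjt, htj⟩ := hmain x
    have hev := stair_eval c hj1 hjt htj
    have hxj : |(j:ℝ)/(N:ℝ) - (x:ℝ)| < δ := by
      have ha : |(j:ℝ) - (N:ℝ)*(x:ℝ)| ≤ 1 := abs_le.2 ⟨by linarith, by linarith⟩
      have heq : (j:ℝ)/(N:ℝ) - (x:ℝ) = ((j:ℝ) - (N:ℝ)*(x:ℝ))/(N:ℝ) := by field_simp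
      rw [heq, abs_div, abs_of_pos hNpos]
      calc |(j:ℝ) - (N:ℝ)*(x:ℝ)|/(N:ℝ) ≤ 1/(N:ℝ) := by gcongr
        _ < δ := hNinv
    have hxj1 : |((j+1:ℕ):ℝ)/(N:ℝ) - (x:ℝ)| < δ := by
      have ha : |((j:ℝ)+1) - (N:ℝ)*(x:ℝ)| ≤ 1 := abs_le.2 ⟨by linarith, by linarith⟩
      have heq : ((j+1:ℕ):ℝ)/(N:ℝ) - (x:ℝ) = (((j:ℝ)+1) - (N:ℝ)*(x:ℝ))/(N:ℝ) := by
        push_cast; field_simp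
      rw [heq, abs_div, abs_of_pos hNpos]
      calc |((j:ℝ)+1) - (N:ℝ)*(x:ℝ)|/(N:ℝ) ≤ 1/(N:ℝ) := by gcongr
        _ < δ := hNinv
    have h1 := hcnear j x (by omega) hxj
    have h2 := hcnear (j+1) x hj1 hxj1
    have hρ0 := rampF_nonneg N j (x:ℝ)
    have hρ1 := rampF_le_one N j (x:ℝ)
    have hgf : g x - f x = (c j - f x)
        + ((c (j+1) - f x) - (c j - f x)) * rampF N j (x:ℝ) := by
      rw [hgx x, hev]; ring
    rw [Real.dist_eq]
    have habs : |g x - f x| ≤ 1/(2*(Q:ℝ)) + ε/4 := by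
      rw [hgf]
      exact interp_abs h1 h2 hρ0 hρ1
    linarith
  -- membership in U N Q
  have hmemU : g ∈ U N Q := by
    intro x
    obtain ⟨j, hj1, hjt, htj⟩ := hmain x
    have hev := stair_eval c hj1 hjt htj
    by_cases hw : (N:ℝ)*(x:ℝ) ≤ (j:ℝ) + 99/100
    · left
      have hz : rampF N j (x:ℝ) = 0 := rampF_eq_zero hw
      have hgc : g x = c j := by rw [hgx x, hev, hz]; ring
      have harg : 2*Real.pi*(Q:ℝ)*(g x)
          = ((round ((Q:ℝ) * f (Set.projIcc (0:ℝ) 1 zero_le_one ((j:ℝ)/(N:ℝ)))) : ℤ) : ℝ)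
            * (2*Real.pi) := by
        rw [hgc, hcdef]
        field_simp
      rw [harg, Real.cos_int_mul_two_pi]
      norm_num
    · push_neg at hw
      right
      have harg : 2*Real.pi*(N:ℝ)*(x:ℝ)
          = 2*Real.pi*((N:ℝ)*(x:ℝ) - ((j:ℝ)+1)) + (((j:ℤ)+1 : ℤ):ℝ)*(2*Real.pi) := by
        push_cast; ring
      rw [harg, Real.cos_add_int_mul_two_pi]
      refine cos_near ?_
      rw [abs_mul, abs_of_pos (by positivity : (0:ℝ) < 2*Real.pi)]
      have hle : |(N:ℝ)*(x:ℝ) - ((j:ℝ)+1)| ≤ 1/100 := abs_le.2 ⟨by linarith, by linarith⟩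
      calc 2*Real.pi * |(N:ℝ)*(x:ℝ) - ((j:ℝ)+1)| ≤ 2*Real.pi * (1/100) := by
            exact mul_le_mul_of_nonneg_left hle (by positivity)
        _ = 2*Real.pi/100 := by ring
  -- wrap up
  refine ⟨g, Set.mem_inter (Metric.mem_ball.2 hdist) ?_⟩
  exact Set.mem_iUnion.2 ⟨N, Set.mem_iUnion.2 ⟨hNk, Set.mem_iUnion.2 ⟨Q,
    Set.mem_iUnion.2 ⟨hQk, hmemU⟩⟩⟩⟩


lemma dim_zero {f : C(Set.Icc (0:ℝ) 1, ℝ)}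
    (hf : ∀ k : ℕ, f ∈ ⋃ (P : ℕ) (_ : k+1 ≤ P) (Q : ℕ) (_ : k+1 ≤ Q), U P Q) :
    fourierDim2 (graphOf f) = 0 := by
  have key0 : ∀ s : ℝ, (0 ≤ s ∧ s ≤ 2 ∧ ∃ (μ : Measure (ℝ × ℝ)) (C : ℝ),
      IsProbabilityMeasure μ ∧ μ (graphOf f)ᶜ = 0 ∧ 0 < C ∧
      ∀ ξ : ℝ × ℝ, ξ ≠ 0 → ‖ft2 μ ξ‖ ≤ C * enorm2 ξ ^ (-s / 2)) → s = 0 := by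
    rintro s ⟨hs0, _, μ, C, hprob, hnull, hC, hdecay⟩
    by_contra hne
    have hspos : 0 < s := lt_of_le_of_ne hs0 (Ne.symm hne)
    have htend : Tendsto (fun x : ℝ => C * x ^ (-s/2)) atTop (nhds 0) := by
      have h1 := tendsto_rpow_neg_atTop (by linarith : 0 < s/2)
      have h2 := h1.const_mul C
      rw [mul_zero] at h2
      simpa [neg_div] using h2
    have hev : ∀ᶠ x : ℝ in atTop, C * x ^ (-s/2) < 1/5 :=
      htend.eventually (gt_mem_nhds (by norm_num : (0:ℝ) < 1/5))
    obtain ⟨X, hX⟩ := eventually_atTop.1 hev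
    have hk := hf ⌈X⌉₊
    simp only [Set.mem_iUnion] at hk
    obtain ⟨P, hP, Q, hQ, hU⟩ := hk
    obtain ⟨ξ, hξ0, hξn, hξb⟩ := key hP hQ hU μ hnull
    have h5 := hdecay ξ hξ0
    have hXle : X ≤ enorm2 ξ := by
      have := Nat.le_ceil X
      linarith
    have := hX (enorm2 ξ) hXle
    linarith
  have hsub : {s : ℝ | 0 ≤ s ∧ s ≤ 2 ∧ ∃ (μ : Measure (ℝ × ℝ)) (C : ℝ),
      IsProbabilityMeasure μ ∧ μ (graphOf f)ᶜ = 0 ∧ 0 < C ∧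
      ∀ ξ : ℝ × ℝ, ξ ≠ 0 → ‖ft2 μ ξ‖ ≤ C * enorm2 ξ ^ (-s / 2)} ⊆ {(0:ℝ)} := by
    intro s hs
    rw [Set.mem_singleton_iff]
    exact key0 s hs
  rw [fourierDim2]
  rcases Set.subset_singleton_iff_eq.1 hsub with h | h
  · rw [h, Real.sSup_empty]
  · rw [h, csSup_singleton]

end FDim

theorem typical_fourier_dim_zero :
    {f : C(Set.Icc (0:ℝ) 1, ℝ) | fourierDim2 (graphOf f) = 0}
      ∈ residual C(Set.Icc (0:ℝ) 1, ℝ) := by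
  have hsub : (⋂ k : ℕ, ⋃ (P : ℕ) (_ : k+1 ≤ P) (Q : ℕ) (_ : k+1 ≤ Q), FDim.U P Q)
      ⊆ {f : C(Set.Icc (0:ℝ) 1, ℝ) | fourierDim2 (graphOf f) = 0} := by
    intro f hf
    exact FDim.dim_zero fun k => Set.mem_iInter.1 hf k
  refine Filter.mem_of_superset ?_ hsub
  refine countable_iInter_mem.2 fun k => ?_
  refine residual_of_dense_open ?_ (FDim.dense_A k)
  exact isOpen_iUnion fun P => isOpen_iUnion fun _ => isOpen_iUnion fun Q =>
    isOpen_iUnion fun _ => FDim.isOpen_U P Q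
end
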